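/- arXiv:1512.04770 — 4 statements merged into one kernel-verified Lean document; each statement's English description precedes it below -/
import Mathlib

section
/- Let T be a locally finite rooted tree with Σ_{k∈V} μ_k < ∞. Define λ_p^{(n)} = inf { D_p(f) : μ(|f|^p) = 1, f_o = 0, f_i = f_{i*} for all i with |i| ≥ n+1 }. Then λ_p^{(n)} is nonincreasing in n and λ_p^{(n)} ↓ λ_p as n → N, where λ_p = inf { D_p(f) : μ(|f|^p) = 1, f_o = 0 } and N is the maximal level of T. -/
open scoped ENNReal Classical BigOperators

/-- A rooted tree given by a parent map and a level function. -/
structure PTree (V : Type) where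
  root : V
  par : V → V
  level : V → ℕ
  level_root : level root = 0
  par_root : par root = root
  level_par : ∀ i, i ≠ root → level i = level (par i) + 1
  par_iter_root : ∀ i, par^[level i] i = root

/-- `T.anc k j` : `k` is an ancestor of `j` (or `j` itself), i.e. `j` lies in
the subtree `V_k` rooted at `k`. -/
def PTree.anc {V : Type} (T : PTree V) (k j : V) : Prop := ∃ m, T.par^[m] j = k

/-- The Dirichlet form `D_p(f) = Σ_{i ≠ o} v_i |f_i - f_{i*}|^p` (with values in `ℝ≥0∞`). -/
noncomputable def Dp {V : Type} (T : PTree V) (v : V → ℝ) (p : ℝ) (f : V → ℝ) : ℝ≥0∞ :=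
  ∑' i : {i : V // i ≠ T.root}, ENNReal.ofReal (v i.1 * |f i.1 - f (T.par i.1)| ^ p)

/-- The principal Dirichlet eigenvalue
`λ_p = inf { D_p(f) : μ(|f|^p) = 1, f_o = 0 }`. -/
noncomputable def lamP {V : Type} (T : PTree V) (v μ : V → ℝ) (p : ℝ) : ℝ≥0∞ :=
  ⨅ (f : V → ℝ) (_ : f T.root = 0)
    (_ : (∑' k : V, ENNReal.ofReal (μ k * |f k| ^ p)) = 1), Dp T v p f

/-- The approximating eigenvalue `λ_p^{(n)}`: the infimum is taken over test
functions that are constant along edges beyond level `n`. -/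
noncomputable def lamPn {V : Type} (T : PTree V) (v μ : V → ℝ) (p : ℝ) (n : ℕ) : ℝ≥0∞ :=
  ⨅ (f : V → ℝ) (_ : f T.root = 0)
    (_ : (∑' k : V, ENNReal.ofReal (μ k * |f k| ^ p)) = 1)
    (_ : ∀ i : V, n + 1 ≤ T.level i → f i = f (T.par i)), Dp T v p f

/-! ### Auxiliary lemmas -/

lemma PTree.level_eq_zero {V : Type} (T : PTree V) {k : V} (h : T.level k = 0) : k = T.root := by
  have h2 := T.par_iter_root k
  rwa [h, Function.iterate_zero_apply] at h2

lemma PTree.level_par_eq {V : Type} (T : PTree V) (k : V) :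
    T.level (T.par k) = T.level k - 1 := by
  by_cases hk : k = T.root
  · subst hk; rw [T.par_root, T.level_root]
  · have := T.level_par k hk; omega

lemma PTree.level_iter {V : Type} (T : PTree V) (m : ℕ) (k : V) :
    T.level (T.par^[m] k) = T.level k - m := by
  induction m with
  | zero => simp
  | succ m ih =>
    rw [Function.iterate_succ_apply', T.level_par_eq, ih]; omega

/-- Truncation of `h` at level `n`. -/
noncomputable def PTree.trunc {V : Type} (T : PTree V) (n : ℕ) (h : V → ℝ) : V → ℝ :=
  fun k => h (T.par^[T.level k - n] k)

lemma PTree.trunc_eq_of_le {V : Type} (T : PTree V) {n : ℕ} {h : V → ℝ} {k : V}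
    (hk : T.level k ≤ n) : T.trunc n h k = h k := by
  unfold PTree.trunc
  rw [Nat.sub_eq_zero_of_le hk, Function.iterate_zero_apply]

lemma PTree.trunc_par {V : Type} (T : PTree V) {n : ℕ} {h : V → ℝ} {i : V}
    (hi : n + 1 ≤ T.level i) : T.trunc n h i = T.trunc n h (T.par i) := by
  unfold PTree.trunc
  rw [T.level_par_eq]
  have h1 : T.level i - n = (T.level i - 1 - n) + 1 := by omega
  rw [h1, Function.iterate_succ_apply]

/-- Clamp a real number into `[-M, M]`. -/
noncomputable def clampR (M x : ℝ) : ℝ := max (-M) (min M x)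

lemma clampR_abs_le {M x : ℝ} (hM : 0 ≤ M) : |clampR M x| ≤ M := by
  unfold clampR
  rw [abs_le]
  constructor
  · exact le_max_left _ _
  · exact max_le (by linarith) (min_le_left _ _)

lemma clampR_lip (M x y : ℝ) : |clampR M x - clampR M y| ≤ |x - y| := by
  unfold clampR
  calc |max (-M) (min M x) - max (-M) (min M y)|
      = |max (min M x) (-M) - max (min M y) (-M)| := by rw [max_comm (-M), max_comm (-M)]
    _ ≤ |min M x - min M y| := abs_max_sub_max_le_abs _ _ _
    _ ≤ max |M - M| |x - y| := abs_min_sub_min_le_max _ _ _ _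
    _ ≤ |x - y| := by simp

lemma clampR_zero {M : ℝ} (hM : 0 ≤ M) : clampR M 0 = 0 := by
  unfold clampR
  rw [min_eq_right hM, max_eq_right (by linarith)]

lemma clampR_eq_self {M x : ℝ} (h : |x| ≤ M) : clampR M x = x := by
  rw [abs_le] at h
  unfold clampR
  rw [min_eq_right h.2, max_eq_right h.1]

lemma scale_term (p c w x : ℝ) (hc : 0 < c) :
    ENNReal.ofReal (w * |x / c| ^ p) =
      ENNReal.ofReal (w * |x| ^ p) / ENNReal.ofReal (c ^ p) := by
  rw [abs_div, abs_of_pos hc, Real.div_rpow (abs_nonneg x) hc.le, ← mul_div_assoc,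
    ENNReal.ofReal_div_of_pos (Real.rpow_pos_of_pos hc p)]

/-- The key approximation step. -/
lemma key_le {V : Type} (T : PTree V) (v μ : V → ℝ) (p : ℝ)
    (hp : 1 < p) (hv : ∀ i, 0 < v i) (hμ : ∀ i, 0 < μ i)
    (hmass : (∑' k : V, ENNReal.ofReal (μ k)) ≠ ⊤)
    (f : V → ℝ) (hf0 : f T.root = 0)
    (hfn : (∑' k : V, ENNReal.ofReal (μ k * |f k| ^ p)) = 1) :
    (⨅ n : ℕ, lamPn T v μ p n) ≤ Dp T v p f := by
  have hp0 : (0:ℝ) < p := by linarith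
  by_cases hD : Dp T v p f = ⊤
  · rw [hD]; exact le_top
  -- Main claim: for every ε ∈ (0,1) the infimum is at most `Dp f / (1-ε)`.
  have claim : ∀ ε : ℝ, 0 < ε → ε < 1 →
      (⨅ n : ℕ, lamPn T v μ p n) ≤ Dp T v p f / ENNReal.ofReal (1 - ε) := by
    intro ε hε0 hε1
    set hfun : ℕ → V → ℝ := fun m k => clampR (m : ℝ) (f k) with hhfun
    set b : ℕ → ℝ≥0∞ := fun m =>
      ∑' k : V, (if T.level k ≤ m then ENNReal.ofReal (μ k * |hfun m k| ^ p) else 0) with hb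
    have hsup : (1 : ℝ≥0∞) ≤ ⨆ m, b m := by
      rw [← hfn, ENNReal.tsum_eq_iSup_sum]
      apply iSup_le
      intro s
      set m : ℕ := s.sup (fun k => max (T.level k) ⌈|f k|⌉₊) with hm
      have hstep : ∑ k ∈ s, ENNReal.ofReal (μ k * |f k| ^ p)
          = ∑ k ∈ s, (if T.level k ≤ m then ENNReal.ofReal (μ k * |hfun m k| ^ p) else 0) := by
        apply Finset.sum_congr rfl
        intro k hk
        have hsup' : max (T.level k) ⌈|f k|⌉₊ ≤ m := by
          rw [hm]; exact Finset.le_sup (f := fun k => max (T.level k) ⌈|f k|⌉₊) hk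
        have hlev : T.level k ≤ m := le_trans (le_max_left _ _) hsup'
        have hceil : ⌈|f k|⌉₊ ≤ m := le_trans (le_max_right _ _) hsup'
        have habs : |f k| ≤ (m : ℝ) :=
          le_trans (Nat.le_ceil _) (by exact_mod_cast hceil)
        rw [if_pos hlev, hhfun]
        simp only []
        rw [clampR_eq_self habs]
      rw [hstep]
      exact le_trans (ENNReal.sum_le_tsum s) (le_iSup b m)
    have hlt1 : ENNReal.ofReal (1 - ε) < 1 := ENNReal.ofReal_lt_one.2 (by linarith)
    have hex : ∃ m, ENNReal.ofReal (1 - ε) < b m := by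
      rw [← lt_iSup_iff]
      exact lt_of_lt_of_le hlt1 hsup
    obtain ⟨m, hmlt⟩ := hex
    set h : V → ℝ := hfun m with hh
    set g : V → ℝ := T.trunc m h with hg
    have hm0 : (0:ℝ) ≤ (m:ℝ) := Nat.cast_nonneg m
    have hgabs : ∀ k, |g k| ≤ (m : ℝ) := fun k => clampR_abs_le hm0
    set S : ℝ≥0∞ := ∑' k : V, ENNReal.ofReal (μ k * |g k| ^ p) with hS
    have hbS : b m ≤ S := by
      apply ENNReal.tsum_le_tsum
      intro k
      split_ifs with hk
      · rw [hg, T.trunc_eq_of_le hk]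
      · exact zero_le
    have hS1 : ENNReal.ofReal (1 - ε) < S := lt_of_lt_of_le hmlt hbS
    have hS0 : S ≠ 0 := by
      intro hC
      rw [hC] at hS1
      exact (not_lt.2 zero_le) hS1
    have hStop : S ≠ ⊤ := by
      have hbound : S ≤ ENNReal.ofReal ((m:ℝ) ^ p) * ∑' k : V, ENNReal.ofReal (μ k) := by
        rw [← ENNReal.tsum_mul_left]
        apply ENNReal.tsum_le_tsum
        intro k
        rw [← ENNReal.ofReal_mul (Real.rpow_nonneg hm0 p)]
        apply ENNReal.ofReal_le_ofReal
        have h1 : |g k| ^ p ≤ (m:ℝ) ^ p :=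
          Real.rpow_le_rpow (abs_nonneg _) (hgabs k) hp0.le
        have h2 : (0:ℝ) ≤ μ k := (hμ k).le
        nlinarith
      exact ne_top_of_le_ne_top (ENNReal.mul_ne_top ENNReal.ofReal_ne_top hmass) hbound
    -- normalization constant
    set s : ℝ := S.toReal ^ (1/p) with hsdef
    have hsPos : 0 < s := Real.rpow_pos_of_pos (ENNReal.toReal_pos hS0 hStop) _
    have hsp : s ^ p = S.toReal := by
      rw [hsdef, ← Real.rpow_mul ENNReal.toReal_nonneg, one_div,
        inv_mul_cancel₀ (ne_of_gt hp0), Real.rpow_one]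
    have hofs : ENNReal.ofReal (s ^ p) = S := by
      rw [hsp, ENNReal.ofReal_toReal hStop]
    set g' : V → ℝ := fun k => g k / s with hg'
    -- the normalized function has norm 1
    have hg'norm : (∑' k : V, ENNReal.ofReal (μ k * |g' k| ^ p)) = 1 := by
      have : ∀ k : V, ENNReal.ofReal (μ k * |g' k| ^ p)
          = ENNReal.ofReal (μ k * |g k| ^ p) * (ENNReal.ofReal (s ^ p))⁻¹ := by
        intro k
        rw [hg']
        simp only []
        rw [scale_term p s (μ k) (g k) hsPos, div_eq_mul_inv]
      simp_rw [this]
      rw [ENNReal.tsum_mul_right, ← hS, hofs, ← div_eq_mul_inv, ENNReal.div_self hS0 hStop]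
    have hg'0 : g' T.root = 0 := by
      have hgr : g T.root = 0 := by
        rw [hg, T.trunc_eq_of_le (by rw [T.level_root]; exact Nat.zero_le m), hh, hhfun]
        simp only []
        rw [hf0, clampR_zero hm0]
      rw [hg']; simp only []; rw [hgr, zero_div]
    have hg'c : ∀ i : V, m + 1 ≤ T.level i → g' i = g' (T.par i) := by
      intro i hi
      rw [hg']
      simp only []
      rw [hg, T.trunc_par hi]
    -- Dp g ≤ Dp f
    have hDg : Dp T v p g ≤ Dp T v p f := by
      unfold Dp
      apply ENNReal.tsum_le_tsum
      rintro ⟨i, hi⟩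
      simp only []
      by_cases hle : T.level i ≤ m
      · have hlep : T.level (T.par i) ≤ m := by
          rw [T.level_par_eq]; omega
        rw [hg, T.trunc_eq_of_le hle, T.trunc_eq_of_le hlep]
        apply ENNReal.ofReal_le_ofReal
        apply mul_le_mul_of_nonneg_left _ (hv i).le
        apply Real.rpow_le_rpow (abs_nonneg _) _ hp0.le
        rw [hh, hhfun]
        exact clampR_lip _ _ _
      · push_neg at hle
        have : g i = g (T.par i) := by rw [hg]; exact T.trunc_par (by omega)
        rw [this, sub_self, abs_zero, Real.zero_rpow (ne_of_gt hp0), mul_zero,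
          ENNReal.ofReal_zero]
        exact zero_le
    -- Dp g' = Dp g / S
    have hDg' : Dp T v p g' = Dp T v p g / S := by
      unfold Dp
      have : ∀ i : {i : V // i ≠ T.root},
          ENNReal.ofReal (v i.1 * |g' i.1 - g' (T.par i.1)| ^ p)
            = ENNReal.ofReal (v i.1 * |g i.1 - g (T.par i.1)| ^ p)
              * (ENNReal.ofReal (s ^ p))⁻¹ := by
        intro i
        rw [hg']
        simp only []
        rw [div_sub_div_same, scale_term p s (v i.1) _ hsPos, div_eq_mul_inv]
      simp_rw [this]
      rw [ENNReal.tsum_mul_right, hofs, div_eq_mul_inv]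
    have hlam : lamPn T v μ p m ≤ Dp T v p g' := by
      unfold lamPn
      exact iInf_le_of_le g' (iInf_le_of_le hg'0 (iInf_le_of_le hg'norm (iInf_le _ hg'c)))
    calc (⨅ n : ℕ, lamPn T v μ p n) ≤ lamPn T v μ p m := iInf_le _ m
      _ ≤ Dp T v p g' := hlam
      _ = Dp T v p g / S := hDg'
      _ ≤ Dp T v p f / ENNReal.ofReal (1 - ε) := ENNReal.div_le_div hDg hS1.le
  -- pass to the limit ε → 0
  have hεj : ∀ j : ℕ, (⨅ n : ℕ, lamPn T v μ p n)
      ≤ Dp T v p f / ENNReal.ofReal (1 - ((j:ℝ)+2)⁻¹) := by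
    intro j
    apply claim
    · positivity
    · have hj : (0:ℝ) ≤ (j:ℝ) := Nat.cast_nonneg j
      have h2 : (2:ℝ) ≤ (j:ℝ) + 2 := by linarith
      have : ((j:ℝ)+2)⁻¹ ≤ (2:ℝ)⁻¹ := by
        apply inv_anti₀ (by norm_num) h2
      linarith
  have htend : Filter.Tendsto (fun j : ℕ => Dp T v p f / ENNReal.ofReal (1 - ((j:ℝ)+2)⁻¹))
      Filter.atTop (nhds (Dp T v p f)) := by
    have t0 : Filter.Tendsto (fun j : ℕ => ((j:ℝ) + 2)) Filter.atTop Filter.atTop :=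
      Filter.tendsto_atTop_add_const_right _ 2 tendsto_natCast_atTop_atTop
    have t1 : Filter.Tendsto (fun j : ℕ => ((j:ℝ) + 2)⁻¹) Filter.atTop (nhds 0) :=
      t0.inv_tendsto_atTop
    have t2 : Filter.Tendsto (fun j : ℕ => (1:ℝ) - ((j:ℝ) + 2)⁻¹) Filter.atTop (nhds 1) := by
      have := Filter.Tendsto.sub (tendsto_const_nhds (x := (1:ℝ))) t1
      simpa using this
    have t3 : Filter.Tendsto (fun j : ℕ => ENNReal.ofReal (1 - ((j:ℝ) + 2)⁻¹))
        Filter.atTop (nhds 1) := by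
      have := ENNReal.tendsto_ofReal t2
      simpa using this
    have t4 : Filter.Tendsto (fun j : ℕ => (ENNReal.ofReal (1 - ((j:ℝ) + 2)⁻¹))⁻¹)
        Filter.atTop (nhds 1) := by
      have := ENNReal.tendsto_inv_iff.2 t3
      simpa using this
    have t5 := ENNReal.Tendsto.const_mul (a := Dp T v p f) t4 (Or.inl one_ne_zero)
    simp only [mul_one] at t5
    simpa [div_eq_mul_inv] using t5
  exact ge_of_tendsto' htend hεj

/-- If the total `μ`-mass is finite then `λ_p^{(n)} ↓ λ_p`. -/
theorem lamPn_antitone_tendsto {V : Type} (T : PTree V) (v μ : V → ℝ) (p : ℝ)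
    (hp : 1 < p) (hv : ∀ i, 0 < v i) (hμ : ∀ i, 0 < μ i)
    (hmass : (∑' k : V, ENNReal.ofReal (μ k)) ≠ ⊤) :
    Antitone (fun n => lamPn T v μ p n) ∧ (⨅ n : ℕ, lamPn T v μ p n) = lamP T v μ p := by
  constructor
  · intro a b hab
    simp only []
    unfold lamPn
    apply le_iInf; intro f
    apply le_iInf; intro h1
    apply le_iInf; intro h2
    apply le_iInf; intro h3
    exact iInf_le_of_le f (iInf_le_of_le h1 (iInf_le_of_le h2
      (iInf_le_of_le (fun i hi => h3 i (by omega)) le_rfl)))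
  · apply le_antisymm
    · -- ⨅ lamPn ≤ lamP
      unfold lamP
      apply le_iInf; intro f
      apply le_iInf; intro h1
      apply le_iInf; intro h2
      exact key_le T v μ p hp hv hμ hmass f h1 h2
    · -- lamP ≤ ⨅ lamPn
      apply le_iInf; intro n
      unfold lamP lamPn
      apply le_iInf; intro f
      apply le_iInf; intro h1
      apply le_iInf; intro h2
      apply le_iInf; intro _
      exact iInf_le_of_le f (iInf_le_of_le h1 (iInf_le_of_le h2 le_rfl))
end

section
/- Let T be a locally finite rooted tree and suppose g solves the Poisson equation Ω_p g(i) = -μ_i |f_i|^{p-2} f_i for all i ∈ V \ {o}. Then for every k ∈ V \ {o} and every n ≥ |k|: Σ_{j ∈ Λ_{n+1} ∩ V_k} v_j |g_{j*} - g_j|^{p-2}(g_{j*} - g_j) + v_k |g_k - g_{k*}|^{p-2}(g_k - g_{k*}) = Σ_{j ∈ V_k ∩ V(n)} μ_j |f_j|^{p-2} f_j, where Λ_m is the set of vertices at level m, V_k the vertex set of the subtree rooted at k, and V(n) the set of vertices of level ≤ n. -/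
open scoped ENNReal Classical BigOperators

noncomputable def Omega {V : Type} (T : PTree V)
    (hfin : ∀ i : V, {j : V | T.par j = i ∧ j ≠ T.root}.Finite)
    (v : V → ℝ) (p : ℝ) (f : V → ℝ) (i : V) : ℝ :=
  (∑ j ∈ (hfin i).toFinset, v j * |f j - f i| ^ (p - 2) * (f j - f i))
    + v i * |f (T.par i) - f i| ^ (p - 2) * (f (T.par i) - f i)

namespace PoissonAux

variable {V : Type} (T : PTree V)

lemma iterate_par_root (m : ℕ) : T.par^[m] T.root = T.root :=
  Function.iterate_fixed T.par_root m

lemma level_of_iter {k : V} (hk : k ≠ T.root) :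
    ∀ m (j : V), T.par^[m] j = k → T.level j = T.level k + m := by
  intro m
  induction m with
  | zero => intro j h; simp only [Function.iterate_zero, id_eq] at h; simp [h]
  | succ m ih =>
    intro j h
    have hj : j ≠ T.root := by
      rintro rfl
      rw [iterate_par_root] at h
      exact hk h.symm
    rw [Function.iterate_succ_apply] at h
    have h2 := ih (T.par j) h
    rw [T.level_par j hj, h2]
    ring

variable (hfin : ∀ i : V, {j : V | T.par j = i ∧ j ≠ T.root}.Finite)

noncomputable def frontier (k : V) : ℕ → Finset V
  | 0 => {k}
  | (m+1) => (frontier k m).biUnion (fun i => (hfin i).toFinset)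

lemma mem_frontier {k : V} (hk : k ≠ T.root) :
    ∀ m (j : V), j ∈ frontier T hfin k m ↔ T.level j = T.level k + m ∧ T.anc k j := by
  intro m
  induction m with
  | zero =>
    intro j
    simp only [frontier, Finset.mem_singleton]
    constructor
    · rintro rfl; exact ⟨by simp, ⟨0, rfl⟩⟩
    · rintro ⟨hl, ⟨m', hm'⟩⟩
      have := level_of_iter T hk m' j hm'
      have hm0 : m' = 0 := by omega
      rw [hm0] at hm'
      exact hm'
  | succ m ih =>
    intro j
    simp only [frontier, Finset.mem_biUnion, Set.Finite.mem_toFinset, Set.mem_setOf_eq]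
    constructor
    · rintro ⟨i, hi, hpar, hjroot⟩
      obtain ⟨hil, ⟨m', hm'⟩⟩ := (ih i).1 hi
      refine ⟨?_, ⟨m' + 1, ?_⟩⟩
      · rw [T.level_par j hjroot, hpar, hil]; omega
      · rw [Function.iterate_succ_apply, hpar, hm']
    · rintro ⟨hl, ⟨m', hm'⟩⟩
      have hjroot : j ≠ T.root := by
        rintro rfl
        rw [T.level_root] at hl
        omega
      have hlev := level_of_iter T hk m' j hm'
      have hm1 : m' = m + 1 := by omega
      subst hm1
      rw [Function.iterate_succ_apply] at hm'
      refine ⟨T.par j, (ih (T.par j)).2 ⟨?_, ⟨m, hm'⟩⟩, rfl, hjroot⟩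
      have := T.level_par j hjroot
      omega

lemma frontier_ne_root {k : V} (hk : k ≠ T.root) {m : ℕ} {j : V}
    (hj : j ∈ frontier T hfin k (m + 1)) : j ≠ T.root := by
  obtain ⟨hl, -⟩ := (mem_frontier T hfin hk (m+1) j).1 hj
  intro h
  rw [h, T.level_root] at hl
  omega

lemma frontier_disjoint {k : V} (hk : k ≠ T.root) {m m' : ℕ} (h : m ≠ m') :
    Disjoint (frontier T hfin k m) (frontier T hfin k m') := by
  rw [Finset.disjoint_left]
  intro j hj hj'
  obtain ⟨h1, -⟩ := (mem_frontier T hfin hk m j).1 hj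
  obtain ⟨h2, -⟩ := (mem_frontier T hfin hk m' j).1 hj'
  omega

noncomputable def ball (k : V) (m : ℕ) : Finset V :=
  (Finset.range (m+1)).biUnion (frontier T hfin k)

lemma mem_ball {k : V} (hk : k ≠ T.root) (m : ℕ) (j : V) :
    j ∈ ball T hfin k m ↔ T.anc k j ∧ T.level j ≤ T.level k + m := by
  simp only [ball, Finset.mem_biUnion, Finset.mem_range]
  constructor
  · rintro ⟨r, hr, hj⟩
    obtain ⟨hl, ha⟩ := (mem_frontier T hfin hk r j).1 hj
    exact ⟨ha, by omega⟩
  · rintro ⟨⟨m', hm'⟩, hle⟩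
    have hlev := level_of_iter T hk m' j hm'
    exact ⟨m', by omega, (mem_frontier T hfin hk m' j).2 ⟨hlev, ⟨m', hm'⟩⟩⟩

lemma sum_ball {k : V} (hk : k ≠ T.root) (m : ℕ) (F : V → ℝ) :
    ∑ j ∈ ball T hfin k m, F j
      = ∑ r ∈ Finset.range (m+1), ∑ j ∈ frontier T hfin k r, F j := by
  refine Finset.sum_biUnion ?_
  intro a _ b _ hab
  exact frontier_disjoint T hfin hk hab

lemma tsum_eq_finset_sum {P : V → Prop} (F : V → ℝ) (s : Finset V)
    (h : ∀ j, P j ↔ j ∈ s) :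
    ∑' j : {j : V // P j}, F j.1 = ∑ j ∈ s, F j := by
  rw [← Finset.tsum_subtype s F]
  exact ((Equiv.subtypeEquivRight h).tsum_eq (fun j => F j.1))

noncomputable def Gf (T : PTree V) (v : V → ℝ) (p : ℝ) (g : V → ℝ) (j : V) : ℝ :=
  v j * |g (T.par j) - g j| ^ (p - 2) * (g (T.par j) - g j)

noncomputable def Ff (μ : V → ℝ) (p : ℝ) (f : V → ℝ) (j : V) : ℝ :=
  μ j * (|f j| ^ (p - 2) * f j)

lemma children_sum (v μ : V → ℝ) (p : ℝ) (f g : V → ℝ)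
    (hpoisson : ∀ i, i ≠ T.root →
      Omega T hfin v p g i = -(μ i) * (|f i| ^ (p - 2) * f i))
    (i : V) (hi : i ≠ T.root) :
    ∑ j ∈ (hfin i).toFinset, Gf T v p g j = Gf T v p g i + Ff μ p f i := by
  have h := hpoisson i hi
  unfold Omega at h
  have hterm : ∀ j ∈ (hfin i).toFinset,
      v j * |g j - g i| ^ (p - 2) * (g j - g i) = -(Gf T v p g j) := by
    intro j hj
    obtain ⟨hpar, -⟩ := (Set.Finite.mem_toFinset _).1 hj
    rw [Gf, hpar, abs_sub_comm]
    ring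
  rw [Finset.sum_congr rfl hterm, Finset.sum_neg_distrib] at h
  have hFf : Ff μ p f i = μ i * (|f i| ^ (p - 2) * f i) := rfl
  have hGf : Gf T v p g i = v i * |g (T.par i) - g i| ^ (p - 2) * (g (T.par i) - g i) := rfl
  rw [hFf, hGf]
  linarith [h]

lemma main_induction (v μ : V → ℝ) (p : ℝ) (f g : V → ℝ) {k : V} (hk : k ≠ T.root)
    (hpoisson : ∀ i, i ≠ T.root →
      Omega T hfin v p g i = -(μ i) * (|f i| ^ (p - 2) * f i)) :
    ∀ m : ℕ,
      (∑ j ∈ frontier T hfin k (m+1), Gf T v p g j) - Gf T v p g k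
        = ∑ j ∈ ball T hfin k m, Ff μ p f j := by
  intro m
  induction m with
  | zero =>
    have h1 : frontier T hfin k 1 = ({k} : Finset V).biUnion (fun i => (hfin i).toFinset) := rfl
    rw [h1, Finset.singleton_biUnion, children_sum T hfin v μ p f g hpoisson k hk]
    have h2 : ball T hfin k 0 = frontier T hfin k 0 := by
      simp [ball]
    rw [h2]
    have h3 : frontier T hfin k 0 = {k} := rfl
    rw [h3, Finset.sum_singleton]
    ring
  | succ m ih =>
    have hstep : ∑ j ∈ frontier T hfin k (m+2), Gf T v p g j
        = ∑ i ∈ frontier T hfin k (m+1), (Gf T v p g i + Ff μ p f i) := by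
      have h1 : frontier T hfin k (m+2)
          = (frontier T hfin k (m+1)).biUnion (fun i => (hfin i).toFinset) := rfl
      rw [h1, Finset.sum_biUnion]
      · refine Finset.sum_congr rfl ?_
        intro i hi
        exact children_sum T hfin v μ p f g hpoisson i (frontier_ne_root T hfin hk hi)
      · intro a _ b _ hab
        simp only [Function.onFun]
        rw [Finset.disjoint_left]
        intro j hj hj'
        obtain ⟨hp1, -⟩ := (Set.Finite.mem_toFinset _).1 hj
        obtain ⟨hp2, -⟩ := (Set.Finite.mem_toFinset _).1 hj'
        exact hab (hp1 ▸ hp2 ▸ rfl)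
    rw [hstep, Finset.sum_add_distrib]
    have hball : ∑ j ∈ ball T hfin k (m+1), Ff μ p f j
        = ∑ j ∈ ball T hfin k m, Ff μ p f j
          + ∑ j ∈ frontier T hfin k (m+1), Ff μ p f j := by
      rw [sum_ball T hfin hk, sum_ball T hfin hk, Finset.sum_range_succ]
    rw [hball, ← ih]
    ring

end PoissonAux

/-- Telescoping identity obtained by summing the Poisson equation
`Ω_p g(i) = -μ_i |f_i|^{p-2} f_i` over `V_k ∩ V(n)`. -/
theorem poisson_telescoping {V : Type} (T : PTree V)
    (hfin : ∀ i : V, {j : V | T.par j = i ∧ j ≠ T.root}.Finite)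
    (v μ : V → ℝ) (p : ℝ) (hp : 1 < p) (hv : ∀ i, 0 < v i) (hμ : ∀ i, 0 < μ i)
    (f g : V → ℝ)
    (hpoisson : ∀ i, i ≠ T.root →
      Omega T hfin v p g i = -(μ i) * (|f i| ^ (p - 2) * f i)) :
    ∀ k, k ≠ T.root → ∀ n : ℕ, T.level k ≤ n →
      (∑' j : {j : V // T.level j = n + 1 ∧ T.anc k j},
          v j.1 * |g (T.par j.1) - g j.1| ^ (p - 2) * (g (T.par j.1) - g j.1))
        + v k * |g k - g (T.par k)| ^ (p - 2) * (g k - g (T.par k))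
      = ∑' j : {j : V // T.anc k j ∧ T.level j ≤ n},
          μ j.1 * (|f j.1| ^ (p - 2) * f j.1) := by
  intro k hk n hn
  set m := n - T.level k with hm
  have hnm : n = T.level k + m := by omega
  have h1 : (∑' j : {j : V // T.level j = n + 1 ∧ T.anc k j},
      v j.1 * |g (T.par j.1) - g j.1| ^ (p - 2) * (g (T.par j.1) - g j.1))
      = ∑ j ∈ PoissonAux.frontier T hfin k (m+1), PoissonAux.Gf T v p g j := by
    refine PoissonAux.tsum_eq_finset_sum (PoissonAux.Gf T v p g) _ ?_
    intro j
    rw [PoissonAux.mem_frontier T hfin hk]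
    constructor
    · rintro ⟨hl, ha⟩; exact ⟨by omega, ha⟩
    · rintro ⟨hl, ha⟩; exact ⟨by omega, ha⟩
  have h2 : (∑' j : {j : V // T.anc k j ∧ T.level j ≤ n},
      μ j.1 * (|f j.1| ^ (p - 2) * f j.1))
      = ∑ j ∈ PoissonAux.ball T hfin k m, PoissonAux.Ff μ p f j := by
    refine PoissonAux.tsum_eq_finset_sum (PoissonAux.Ff μ p f) _ ?_
    intro j
    rw [PoissonAux.mem_ball T hfin hk]
    constructor
    · rintro ⟨ha, hl⟩; exact ⟨ha, by omega⟩
    · rintro ⟨ha, hl⟩; exact ⟨ha, by omega⟩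
  rw [h1, h2]
  have hmain := PoissonAux.main_induction T hfin v μ p f g hk hpoisson m
  have hGk : v k * |g k - g (T.par k)| ^ (p - 2) * (g k - g (T.par k))
      = -(PoissonAux.Gf T v p g k) := by
    rw [PoissonAux.Gf, abs_sub_comm]
    ring
  rw [hGk]
  linarith [hmain]
end

section
/- Let T be a locally finite rooted tree with Σ_k μ_k < ∞ and p > 1. For any f with f_o = 0 and f_i > f_{i*} for all i ∈ V \ {o} (f ∈ 𝔉_I), one has λ_p ≥ inf_{i ∈ V\{o}} I_i(f)^{-1}, where I_i(f) = (v_i(f_i - f_{i*})^{p-1})^{-1} Σ_{j ∈ V_i} μ_j f_j^{p-1} and λ_p = inf{D_p(f) : μ(|f|^p) = 1, f_o = 0}. -/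
open scoped ENNReal Classical BigOperators

/-- The single-summation operator
`I_i(f) = (v_i (f_i - f_{i*})^{p-1})⁻¹ Σ_{j ∈ V_i} μ_j f_j^{p-1}` (in `ℝ≥0∞`). -/
noncomputable def Iop {V : Type} (T : PTree V) (v μ : V → ℝ) (p : ℝ)
    (f : V → ℝ) (i : V) : ℝ≥0∞ :=
  (∑' j : {j : V // T.anc i j}, ENNReal.ofReal (μ j.1 * f j.1 ^ (p - 1)))
    / ENNReal.ofReal (v i * (f i - f (T.par i)) ^ (p - 1))

namespace PTree
variable {V : Type} (T : PTree V)

lemma iter_root (n : ℕ) : T.par^[n] T.root = T.root := by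
  induction n with
  | zero => rfl
  | succ n ih => rw [Function.iterate_succ_apply', ih, T.par_root]

lemma root_of_level_eq_zero {i : V} (h : T.level i = 0) : i = T.root := by
  by_contra hi
  have := T.level_par i hi
  omega

lemma level_iter_s11 (j : V) (m : ℕ) : T.level (T.par^[m] j) = T.level j - m := by
  induction m with
  | zero => simp
  | succ m ih =>
    rw [Function.iterate_succ_apply']
    by_cases h : T.par^[m] j = T.root
    · rw [h, T.par_root, T.level_root]
      have h0 : T.level j - m = 0 := by rw [← ih, h, T.level_root]
      omega
    · have h1 := T.level_par _ h
      omega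

lemma iter_ne_root {k : V} {m : ℕ} (hm : m < T.level k) : T.par^[m] k ≠ T.root := by
  intro h
  have := T.level_iter_s11 k m
  rw [h, T.level_root] at this
  omega

lemma le_level_of_iter_eq {i j : V} {m : ℕ} (hi : i ≠ T.root) (h : T.par^[m] j = i) :
    m ≤ T.level j := by
  by_contra h'
  apply hi
  rw [← h, show m = (m - T.level j) + T.level j by omega,
    Function.iterate_add_apply, T.par_iter_root, T.iter_root]

lemma iter_eq_sub_level {i j : V} {m : ℕ} (hi : i ≠ T.root) (h : T.par^[m] j = i) :
    m = T.level j - T.level i ∧ 0 < T.level i ∧ T.level i ≤ T.level j := by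
  have h1 : m ≤ T.level j := T.le_level_of_iter_eq hi h
  have h2 : T.level i = T.level j - m := by rw [← h, T.level_iter_s11]
  have h3 : 0 < T.level i := Nat.pos_of_ne_zero fun h0 => hi (T.root_of_level_eq_zero h0)
  omega

lemma anc_iter {i j : V} (hi : i ≠ T.root) (h : T.anc i j) :
    T.par^[T.level j - T.level i] j = i := by
  obtain ⟨m, hm⟩ := h
  obtain ⟨h1, -, -⟩ := T.iter_eq_sub_level hi hm
  rwa [← h1]

lemma anc_level_lt {i j : V} (hi : i ≠ T.root) (h : T.anc i j) :
    T.level j - T.level i < T.level j := by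
  obtain ⟨m, hm⟩ := h
  obtain ⟨-, h2, h3⟩ := T.iter_eq_sub_level hi hm
  omega

/-- Telescoping sum along the path from `k` to the root. -/
lemma telescope (F : V → ℝ) (hF : F T.root = 0) (k : V) :
    ∑ m ∈ Finset.range (T.level k), (F (T.par^[m] k) - F (T.par (T.par^[m] k))) = F k := by
  have h1 : ∀ m, F (T.par (T.par^[m] k)) = F (T.par^[m + 1] k) := fun m => by
    rw [Function.iterate_succ_apply']
  calc ∑ m ∈ Finset.range (T.level k), (F (T.par^[m] k) - F (T.par (T.par^[m] k)))
      = ∑ m ∈ Finset.range (T.level k), (F (T.par^[m] k) - F (T.par^[m + 1] k)) := by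
        exact Finset.sum_congr rfl fun m _ => by rw [h1]
    _ = F (T.par^[0] k) - F (T.par^[T.level k] k) :=
        Finset.sum_range_sub' (fun m => F (T.par^[m] k)) (T.level k)
    _ = F k := by rw [T.par_iter_root, hF, Function.iterate_zero_apply, sub_zero]

end PTree

lemma tsum_ite_subtype {α : Type} (P : α → Prop) (F : α → ℝ≥0∞) :
    ∑' x, (if P x then F x else 0) = ∑' a : {x // P x}, F a.1 := by
  refine Eq.trans (tsum_congr fun x => ?_)
    (tsum_subtype {x | P x} (fun x => if P x then F x else 0)).symm |>.trans
    (tsum_congr fun a => if_pos a.2)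
  rw [Set.indicator_apply]
  by_cases hx : P x
  · rw [if_pos hx]; exact (if_pos hx).symm
  · rw [if_neg hx]; exact (if_neg hx).symm

lemma holder_aux {ι : Type*} (s : Finset ι) (a w : ι → ℝ) (ha : ∀ i ∈ s, 0 ≤ a i)
    (hw : ∀ i ∈ s, 0 < w i) {p : ℝ} (hp : 1 < p) :
    (∑ i ∈ s, a i) ^ p ≤ (∑ i ∈ s, w i) ^ (p - 1) * ∑ i ∈ s, a i ^ p * w i ^ (1 - p) := by
  have hpq := Real.HolderConjugate.conjExponent hp
  have hp0 : (0:ℝ) < p := hpq.pos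
  set q := Real.conjExponent p with hq
  set A := ∑ i ∈ s, a i ^ p * w i ^ (1 - p) with hA
  set B := ∑ i ∈ s, w i with hB
  have hAnn : 0 ≤ A := Finset.sum_nonneg fun i hi =>
    mul_nonneg (Real.rpow_nonneg (ha i hi) _) (Real.rpow_nonneg (hw i hi).le _)
  have hBnn : 0 ≤ B := Finset.sum_nonneg fun i hi => (hw i hi).le
  have e1 : ∑ i ∈ s, (a i * w i ^ ((1 - p)/p)) * w i ^ ((p - 1)/p) = ∑ i ∈ s, a i := by
    refine Finset.sum_congr rfl fun i hi => ?_
    rw [mul_assoc, ← Real.rpow_add (hw i hi), show (1 - p)/p + (p - 1)/p = 0 by ring,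
      Real.rpow_zero, mul_one]
  have e2 : ∀ i ∈ s, |a i * w i ^ ((1 - p)/p)| ^ p = a i ^ p * w i ^ (1 - p) := by
    intro i hi
    rw [abs_of_nonneg (mul_nonneg (ha i hi) (Real.rpow_nonneg (hw i hi).le _)),
      Real.mul_rpow (ha i hi) (Real.rpow_nonneg (hw i hi).le _),
      ← Real.rpow_mul (hw i hi).le, div_mul_cancel₀ _ hp0.ne']
  have e3 : ∀ i ∈ s, |w i ^ ((p - 1)/p)| ^ q = w i := by
    intro i hi
    rw [abs_of_nonneg (Real.rpow_nonneg (hw i hi).le _), ← Real.rpow_mul (hw i hi).le,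
      hq, Real.conjExponent, show (p - 1)/p * (p / (p - 1)) = 1 by
        rw [div_mul_div_comm, mul_comm p (p - 1),
          div_self (mul_ne_zero (sub_ne_zero.mpr hp.ne') hp0.ne')], Real.rpow_one]
  have key2 : ∑ i ∈ s, a i ≤ A ^ (1/p) * B ^ (1/q) := by
    calc ∑ i ∈ s, a i = ∑ i ∈ s, (a i * w i ^ ((1-p)/p)) * w i ^ ((p-1)/p) := e1.symm
    _ ≤ (∑ i ∈ s, |a i * w i ^ ((1-p)/p)| ^ p) ^ (1/p)
        * (∑ i ∈ s, |w i ^ ((p-1)/p)| ^ q) ^ (1/q) :=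
      Real.inner_le_Lp_mul_Lq s _ _ hpq
    _ = A ^ (1/p) * B ^ (1/q) := by rw [Finset.sum_congr rfl e2, Finset.sum_congr rfl e3]
  calc (∑ i ∈ s, a i) ^ p ≤ (A ^ (1/p) * B ^ (1/q)) ^ p :=
    Real.rpow_le_rpow (Finset.sum_nonneg ha) key2 hp0.le
  _ = A ^ ((1/p) * p) * B ^ ((1/q) * p) := by
    rw [Real.mul_rpow (Real.rpow_nonneg hAnn _) (Real.rpow_nonneg hBnn _),
      ← Real.rpow_mul hAnn, ← Real.rpow_mul hBnn]
  _ = (∑ i ∈ s, w i) ^ (p - 1) * A := by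
    rw [one_div_mul_cancel hp0.ne', Real.rpow_one, mul_comm,
      show (1/q) * p = p - 1 by
        rw [hq, Real.conjExponent, one_div_div, div_mul_cancel₀ _ hp0.ne']]

/-- Pairs `(k, m)` with `m < level k` correspond to pairs `(i, j)` with
`i ≠ root` and `i` an ancestor of `j`, via `i = par^[m] k`, `j = k`. -/
def pathEquiv {V : Type} (T : PTree V) :
    {q : V × ℕ // q.2 < T.level q.1} ≃ {q : V × V // q.1 ≠ T.root ∧ T.anc q.1 q.2} where
  toFun a := ⟨(T.par^[a.1.2] a.1.1, a.1.1), T.iter_ne_root a.2, ⟨a.1.2, rfl⟩⟩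
  invFun b := ⟨(b.1.2, T.level b.1.2 - T.level b.1.1), T.anc_level_lt b.2.1 b.2.2⟩
  left_inv a := by
    refine Subtype.ext (Prod.ext rfl ?_)
    have h1 := T.level_iter_s11 a.1.1 a.1.2
    have h2 := a.2
    simp only
    omega
  right_inv b := Subtype.ext (Prod.ext (T.anc_iter b.2.1 b.2.2) rfl)

/-- Splitting the pair subtype into a sigma type. -/
def sigEquiv {V : Type} (T : PTree V) :
    {q : V × V // q.1 ≠ T.root ∧ T.anc q.1 q.2} ≃
      Σ i : {i : V // i ≠ T.root}, {j : V // T.anc i.1 j} where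
  toFun b := ⟨⟨b.1.1, b.2.1⟩, b.1.2, b.2.2⟩
  invFun x := ⟨(x.1.1, x.2.1), x.1.2, x.2.2⟩
  left_inv _ := rfl
  right_inv _ := rfl

/-- Lower bound half of the single-summation variational formula:
for `f ∈ 𝔉_I`, `λ_p ≥ inf_{i ≠ o} I_i(f)⁻¹`. -/
theorem inf_Iop_inv_le_lamP {V : Type} (T : PTree V) (v μ : V → ℝ) (p : ℝ)
    (hp : 1 < p) (hv : ∀ i, 0 < v i) (hμ : ∀ i, 0 < μ i)
    (hmass : (∑' k : V, ENNReal.ofReal (μ k)) ≠ ⊤)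
    (f : V → ℝ) (hf0 : f T.root = 0)
    (hf : ∀ i, i ≠ T.root → f (T.par i) < f i) :
    (⨅ i : {i : V // i ≠ T.root}, (Iop T v μ p f i.1)⁻¹) ≤ lamP T v μ p := by
  rw [lamP]
  refine le_iInf fun g => le_iInf fun hg0 => le_iInf fun hgsum => ?_
  have hp0 : (0:ℝ) < p := lt_trans one_pos hp
  -- positivity of f off the root
  have hfpos : ∀ k, k ≠ T.root → 0 < f k := by
    intro k hk
    rw [← T.telescope f hf0 k]
    have hL : 0 < T.level k :=
      Nat.pos_of_ne_zero fun h0 => hk (T.root_of_level_eq_zero h0)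
    refine Finset.sum_pos (fun m hm => sub_pos.mpr
      (hf _ (T.iter_ne_root (Finset.mem_range.mp hm)))) ?_
    exact ⟨0, Finset.mem_range.mpr hL⟩
  have hfnn : ∀ k, 0 ≤ f k := by
    intro k
    by_cases hk : k = T.root
    · rw [hk, hf0]
    · exact (hfpos k hk).le
  -- the weight `c i = |g_i - g_{i*}|^p (f_i - f_{i*})^{1-p}` in `ℝ≥0∞`
  set c : V → ℝ≥0∞ := fun i =>
    ENNReal.ofReal (|g i - g (T.par i)| ^ p * (f i - f (T.par i)) ^ (1 - p)) with hc
  set S : ℝ≥0∞ := ⨆ i : {i : V // i ≠ T.root}, Iop T v μ p f i.1 with hS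
  -- pointwise Hardy–Hölder bound
  have point : ∀ k : V, ENNReal.ofReal (μ k * |g k| ^ p) ≤
      ∑ m ∈ Finset.range (T.level k),
        ENNReal.ofReal (μ k * f k ^ (p - 1)) * c (T.par^[m] k) := by
    intro k
    by_cases hk : k = T.root
    · subst hk
      rw [hg0, abs_zero, Real.zero_rpow hp0.ne', mul_zero, ENNReal.ofReal_zero]
      exact bot_le
    · set a : ℕ → ℝ := fun m => |g (T.par^[m] k) - g (T.par (T.par^[m] k))| with ha
      set w : ℕ → ℝ := fun m => f (T.par^[m] k) - f (T.par (T.par^[m] k)) with hw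
      have hwpos : ∀ m ∈ Finset.range (T.level k), 0 < w m := fun m hm =>
        sub_pos.mpr (hf _ (T.iter_ne_root (Finset.mem_range.mp hm)))
      have hsw : ∑ m ∈ Finset.range (T.level k), w m = f k := T.telescope f hf0 k
      have hga : |g k| ≤ ∑ m ∈ Finset.range (T.level k), a m := by
        calc |g k| = |∑ m ∈ Finset.range (T.level k),
            (g (T.par^[m] k) - g (T.par (T.par^[m] k)))| := by rw [T.telescope g hg0 k]
        _ ≤ ∑ m ∈ Finset.range (T.level k), a m := Finset.abs_sum_le_sum_abs _ _
      have hreal : μ k * |g k| ^ p ≤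
          ∑ m ∈ Finset.range (T.level k),
            μ k * f k ^ (p - 1) * (a m ^ p * w m ^ (1 - p)) := by
        have h1 : |g k| ^ p ≤ (∑ m ∈ Finset.range (T.level k), a m) ^ p :=
          Real.rpow_le_rpow (abs_nonneg _) hga hp0.le
        have h2 := holder_aux (Finset.range (T.level k)) a w
          (fun m _ => abs_nonneg _) hwpos hp
        rw [hsw] at h2
        calc μ k * |g k| ^ p
            ≤ μ k * (f k ^ (p - 1) * ∑ m ∈ Finset.range (T.level k),
                a m ^ p * w m ^ (1 - p)) :=
              mul_le_mul_of_nonneg_left (h1.trans h2) (hμ k).le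
          _ = ∑ m ∈ Finset.range (T.level k),
                μ k * f k ^ (p - 1) * (a m ^ p * w m ^ (1 - p)) := by
              rw [Finset.mul_sum, Finset.mul_sum]
              exact Finset.sum_congr rfl fun m _ => by ring
      calc ENNReal.ofReal (μ k * |g k| ^ p)
          ≤ ENNReal.ofReal (∑ m ∈ Finset.range (T.level k),
              μ k * f k ^ (p - 1) * (a m ^ p * w m ^ (1 - p))) :=
            ENNReal.ofReal_le_ofReal hreal
        _ = ∑ m ∈ Finset.range (T.level k),
              ENNReal.ofReal (μ k * f k ^ (p - 1) * (a m ^ p * w m ^ (1 - p))) := by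
            refine ENNReal.ofReal_sum_of_nonneg fun m hm => ?_
            exact mul_nonneg (mul_nonneg (hμ k).le (Real.rpow_nonneg (hfnn k) _))
              (mul_nonneg (Real.rpow_nonneg (abs_nonneg _) _)
                (Real.rpow_nonneg (hwpos m hm).le _))
        _ = ∑ m ∈ Finset.range (T.level k),
              ENNReal.ofReal (μ k * f k ^ (p - 1)) * c (T.par^[m] k) := by
            refine Finset.sum_congr rfl fun m hm => ?_
            rw [ENNReal.ofReal_mul (mul_nonneg (hμ k).le (Real.rpow_nonneg (hfnn k) _))]
  -- the double sum, in two ways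
  have stepA : (∑' k : V, ∑ m ∈ Finset.range (T.level k),
      ENNReal.ofReal (μ k * f k ^ (p - 1)) * c (T.par^[m] k)) =
      ∑' a : {q : V × ℕ // q.2 < T.level q.1},
        ENNReal.ofReal (μ a.1.1 * f a.1.1 ^ (p - 1)) * c (T.par^[a.1.2] a.1.1) := by
    rw [← tsum_ite_subtype (fun q : V × ℕ => q.2 < T.level q.1)
      (fun q => ENNReal.ofReal (μ q.1 * f q.1 ^ (p - 1)) * c (T.par^[q.2] q.1)),
      ENNReal.tsum_prod']
    refine tsum_congr fun k => Eq.symm ?_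
    have h0 : ∀ m ∉ Finset.range (T.level k),
        (@ite _ ((k, m).2 < T.level (k, m).1) (Classical.propDecidable _)
          (ENNReal.ofReal (μ (k, m).1 * f (k, m).1 ^ (p - 1)) * c (T.par^[(k, m).2] (k, m).1))
        0) = 0 := fun m hm => if_neg (by simpa using hm)
    exact (tsum_eq_sum h0).trans
      (Finset.sum_congr rfl fun m hm => if_pos (Finset.mem_range.mp hm))
  have stepB : (∑' a : {q : V × ℕ // q.2 < T.level q.1},
      ENNReal.ofReal (μ a.1.1 * f a.1.1 ^ (p - 1)) * c (T.par^[a.1.2] a.1.1)) =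
      ∑' b : {q : V × V // q.1 ≠ T.root ∧ T.anc q.1 q.2},
        ENNReal.ofReal (μ b.1.2 * f b.1.2 ^ (p - 1)) * c b.1.1 := by
    rw [← Equiv.tsum_eq (pathEquiv T) (fun b : {q : V × V // q.1 ≠ T.root ∧ T.anc q.1 q.2} =>
      ENNReal.ofReal (μ b.1.2 * f b.1.2 ^ (p - 1)) * c b.1.1)]
    exact tsum_congr fun a => rfl
  have stepC : (∑' b : {q : V × V // q.1 ≠ T.root ∧ T.anc q.1 q.2},
      ENNReal.ofReal (μ b.1.2 * f b.1.2 ^ (p - 1)) * c b.1.1) =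
      ∑' i : {i : V // i ≠ T.root},
        (∑' j : {j : V // T.anc i.1 j}, ENNReal.ofReal (μ j.1 * f j.1 ^ (p - 1))) * c i.1 := by
    rw [← Equiv.tsum_eq (sigEquiv T).symm (fun b : {q : V × V // q.1 ≠ T.root ∧ T.anc q.1 q.2} =>
      ENNReal.ofReal (μ b.1.2 * f b.1.2 ^ (p - 1)) * c b.1.1),
      ENNReal.tsum_sigma']
    refine tsum_congr fun i => ?_
    rw [← ENNReal.tsum_mul_right]
    exact tsum_congr fun j => rfl
  -- identify each summand with `Iop * (Dirichlet summand)`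
  have stepD : ∀ i : {i : V // i ≠ T.root},
      (∑' j : {j : V // T.anc i.1 j}, ENNReal.ofReal (μ j.1 * f j.1 ^ (p - 1))) * c i.1 =
        Iop T v μ p f i.1 * ENNReal.ofReal (v i.1 * |g i.1 - g (T.par i.1)| ^ p) := by
    intro i
    have hpos : 0 < f i.1 - f (T.par i.1) := sub_pos.mpr (hf i.1 i.2)
    have hd0 : ENNReal.ofReal (v i.1 * (f i.1 - f (T.par i.1)) ^ (p - 1)) ≠ 0 := by
      refine (ENNReal.ofReal_pos.mpr ?_).ne'
      have := hv i.1
      positivity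
    have hsplit : ENNReal.ofReal (v i.1 * |g i.1 - g (T.par i.1)| ^ p) =
        ENNReal.ofReal (v i.1 * (f i.1 - f (T.par i.1)) ^ (p - 1)) * c i.1 := by
      rw [hc]
      rw [← ENNReal.ofReal_mul (mul_nonneg (hv i.1).le (Real.rpow_nonneg hpos.le _))]
      congr 1
      rw [mul_mul_mul_comm, ← Real.rpow_add hpos,
        show (p - 1) + (1 - p) = 0 by ring, Real.rpow_zero, mul_one]
    rw [Iop, hsplit, ← mul_assoc, ENNReal.div_mul_cancel hd0 ENNReal.ofReal_ne_top]
  -- the main estimate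
  have hmain : (1 : ℝ≥0∞) ≤ S * Dp T v p g := by
    calc (1 : ℝ≥0∞) = ∑' k : V, ENNReal.ofReal (μ k * |g k| ^ p) := hgsum.symm
    _ ≤ ∑' k : V, ∑ m ∈ Finset.range (T.level k),
          ENNReal.ofReal (μ k * f k ^ (p - 1)) * c (T.par^[m] k) :=
        ENNReal.tsum_le_tsum point
    _ = ∑' i : {i : V // i ≠ T.root},
          (∑' j : {j : V // T.anc i.1 j}, ENNReal.ofReal (μ j.1 * f j.1 ^ (p - 1))) * c i.1 := by
        rw [stepA, stepB, stepC]
    _ = ∑' i : {i : V // i ≠ T.root},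
          Iop T v μ p f i.1 * ENNReal.ofReal (v i.1 * |g i.1 - g (T.par i.1)| ^ p) :=
        tsum_congr stepD
    _ ≤ ∑' i : {i : V // i ≠ T.root},
          S * ENNReal.ofReal (v i.1 * |g i.1 - g (T.par i.1)| ^ p) :=
        ENNReal.tsum_le_tsum fun i => mul_le_mul_left
          (le_iSup (fun i : {i : V // i ≠ T.root} => Iop T v μ p f i.1) i) _
    _ = S * Dp T v p g := by rw [ENNReal.tsum_mul_left, Dp]
  -- conclude
  have hinv : (⨅ i : {i : V // i ≠ T.root}, (Iop T v μ p f i.1)⁻¹) = S⁻¹ := by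
    rw [hS, ENNReal.inv_iSup]
  rw [hinv]
  by_cases hD : Dp T v p g = ⊤
  · rw [hD]; exact le_top
  by_cases hStop : S = ⊤
  · rw [hStop]; simp
  have hS0 : S ≠ 0 := by
    intro h0
    rw [h0, zero_mul] at hmain
    exact (not_le.mpr zero_lt_one) hmain
  calc S⁻¹ = S⁻¹ * 1 := (mul_one _).symm
  _ ≤ S⁻¹ * (S * Dp T v p g) := mul_le_mul_right hmain _
  _ = (S⁻¹ * S) * Dp T v p g := (mul_assoc _ _ _).symm
  _ = Dp T v p g := by rw [ENNReal.inv_mul_cancel hS0 hStop, one_mul]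
end

section
/- Let T be a locally finite rooted tree with Σ_k μ_k < ∞ and p > 1. For any w : V → (1, ∞] with w_o = ∞ and w_i > 1 for all i ≠ o (w ∈ 𝒲), one has λ_p ≥ inf_{i ∈ V\{o}} R_i(w), where R_i(w) = μ_i^{-1}[ v_i (1 - w_i^{-1})^{p-1} - Σ_{j ∈ J(i)} v_j (w_j - 1)^{p-1} ]. -/
open scoped ENNReal Classical BigOperators

private lemma conv2 {p x y l : ℝ} (hp : 1 ≤ p) (hx : 0 ≤ x) (hy : 0 ≤ y)
    (hl0 : 0 < l) (hl1 : l < 1) :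
    (x + y) ^ p ≤ l ^ (1 - p) * x ^ p + (1 - l) ^ (1 - p) * y ^ p := by
  have hl1' : 0 < 1 - l := by linarith
  have H := Real.rpow_arith_mean_le_arith_mean_rpow Finset.univ ![l, 1 - l] ![x / l, y / (1 - l)]
    (by intro i _; fin_cases i <;> simp <;> linarith)
    (by simp [Fin.sum_univ_two])
    (by intro i _; fin_cases i <;> simp <;> positivity) hp
  simp only [Fin.sum_univ_two, Matrix.cons_val_zero, Matrix.cons_val_one, Matrix.head_cons] at H
  rw [mul_div_cancel₀ _ hl0.ne', mul_div_cancel₀ _ hl1'.ne'] at H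
  refine H.trans (le_of_eq ?_)
  rw [Real.div_rpow hx hl0.le, Real.div_rpow hy hl1'.le,
    Real.rpow_sub hl0, Real.rpow_sub hl1', Real.rpow_one, Real.rpow_one]
  ring

private lemma gen_aux (m C D X : ℝ) (hm : m ≠ 0) :
    m⁻¹ * (C - D) * (m * X) = C * X - D * X := by
  field_simp

private lemma key_ineq {p : ℝ} (hp : 1 < p) {t a b : ℝ} (ht : 1 < t) :
    (1 - t⁻¹) ^ (p - 1) * |a| ^ p ≤ |a - b| ^ p + (t - 1) ^ (p - 1) * |b| ^ p := by
  have ht0 : (0:ℝ) < t := lt_trans one_pos ht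
  have hl0 : 0 < 1 - t⁻¹ := by
    have : t⁻¹ < 1 := inv_lt_one_of_one_lt₀ ht
    linarith
  have hl1 : 1 - t⁻¹ < 1 := by
    have : 0 < t⁻¹ := inv_pos.2 ht0
    linarith
  have h1 : |a| ^ p ≤ (|a - b| + |b|) ^ p := by
    apply Real.rpow_le_rpow (abs_nonneg _) _ (by linarith)
    calc |a| = |(a - b) + b| := by ring_nf
    _ ≤ |a - b| + |b| := abs_add_le _ _
  have h2 := conv2 hp.le (abs_nonneg (a - b)) (abs_nonneg b) hl0 hl1
  have h3 : |a| ^ p ≤ (1 - t⁻¹) ^ (1 - p) * |a - b| ^ p + (1 - (1 - t⁻¹)) ^ (1 - p) * |b| ^ p :=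
    h1.trans h2
  have h4 := mul_le_mul_of_nonneg_left h3 (Real.rpow_nonneg hl0.le (p - 1))
  refine h4.trans (le_of_eq ?_)
  have e1 : (1 - t⁻¹) ^ (p - 1) * (1 - t⁻¹) ^ (1 - p) = 1 := by
    rw [← Real.rpow_add hl0]; norm_num
  have e2 : (1 - (1 - t⁻¹)) = t⁻¹ := by ring
  have e3 : (1 - t⁻¹) ^ (p - 1) * (t⁻¹) ^ (1 - p) = (t - 1) ^ (p - 1) := by
    have hh : (t⁻¹ : ℝ) ^ (1 - p) = t ^ (p - 1) := by
      rw [show (1 - p) = -(p - 1) by ring, Real.rpow_neg (inv_nonneg.2 ht0.le),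
        Real.inv_rpow ht0.le, inv_inv]
    rw [hh, ← Real.mul_rpow hl0.le ht0.le]
    congr 1
    field_simp
  rw [mul_add, ← mul_assoc, ← mul_assoc, e1, e2, e3, one_mul]


/-- The difference-form operator
`R_i(w) = μ_i⁻¹ [ v_i (1 - w_i⁻¹)^{p-1} - Σ_{j ∈ J(i)} v_j (w_j - 1)^{p-1} ]`. -/
noncomputable def Rop {V : Type} (T : PTree V)
    (hfin : ∀ i : V, {j : V | T.par j = i ∧ j ≠ T.root}.Finite)
    (v μ : V → ℝ) (p : ℝ) (w : V → ℝ) (i : V) : ℝ :=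
  (μ i)⁻¹ * (v i * (1 - (w i)⁻¹) ^ (p - 1)
    - ∑ j ∈ (hfin i).toFinset, v j * (w j - 1) ^ (p - 1))

/-- Lower bound in difference form: for any `w ∈ 𝒲` (i.e. `w > 1` off the
root), `λ_p ≥ inf_{i ≠ o} R_i(w)`. -/
theorem inf_Rop_le_lamP {V : Type} (T : PTree V)
    (hfin : ∀ i : V, {j : V | T.par j = i ∧ j ≠ T.root}.Finite)
    (v μ : V → ℝ) (p : ℝ) (hp : 1 < p)
    (hv : ∀ i, 0 < v i) (hμ : ∀ i, 0 < μ i)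
    (hmass : (∑' k : V, ENNReal.ofReal (μ k)) ≠ ⊤)
    (w : V → ℝ) (hw : ∀ i, i ≠ T.root → 1 < w i) :
    (⨅ i : {i : V // i ≠ T.root}, ENNReal.ofReal (Rop T hfin v μ p w i.1))
      ≤ lamP T v μ p := by
  classical
  by_cases hR : ∀ i : V, i ≠ T.root → 0 ≤ Rop T hfin v μ p w i
  swap
  · push_neg at hR
    obtain ⟨i, hi, hRi⟩ := hR
    refine le_trans (iInf_le _ (⟨i, hi⟩ : {i : V // i ≠ T.root})) ?_
    rw [ENNReal.ofReal_eq_zero.2 hRi.le]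
    exact zero_le
  rw [lamP]
  refine le_iInf fun f => le_iInf fun hf0 => le_iInf fun hnorm => ?_
  set c := ⨅ i : {i : V // i ≠ T.root}, ENNReal.ofReal (Rop T hfin v μ p w i.1) with hc
  have hp0 : (0:ℝ) < p := lt_trans one_pos hp
  have hf0p : |f T.root| ^ p = 0 := by rw [hf0, abs_zero, Real.zero_rpow hp0.ne']
  set n : V → ℝ≥0∞ := fun k => ENNReal.ofReal (μ k * |f k| ^ p) with hn
  set g : V → ℝ≥0∞ := fun k =>
    if k = T.root then 0 else ENNReal.ofReal (v k * |f k - f (T.par k)| ^ p) with hg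
  set β : V → ℝ≥0∞ := fun k =>
    ENNReal.ofReal (v k * (w k - 1) ^ (p - 1) * |f (T.par k)| ^ p) with hβ
  set Bb : V → ℝ≥0∞ := fun k => ∑ j ∈ (hfin k).toFinset, β j with hBb
  have hβroot : β T.root = 0 := by
    simp only [hβ]
    rw [T.par_root, hf0p, mul_zero, ENNReal.ofReal_zero]
  have hDp : (∑' k : V, g k) = Dp T v p f := by
    rw [Dp]
    have hsupp : Function.support g ⊆ {i : V | i ≠ T.root} := by
      intro x hx
      simp only [Function.mem_support] at hx
      intro hxr
      apply hx
      simp only [hg]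
      rw [if_pos hxr]
    rw [← tsum_subtype_eq_of_support_subset hsupp]
    exact tsum_congr fun i => by simp only [hg]; rw [if_neg i.2]
  have hN : (∑' k : V, n k) = 1 := by simp only [hn]; exact hnorm
  -- pointwise key inequality
  have hkey : ∀ k : V, c * n k + Bb k ≤ g k + β k := by
    intro k
    by_cases hk : k = T.root
    · subst hk
      have hn0 : n T.root = 0 := by
        simp only [hn]; rw [hf0p, mul_zero, ENNReal.ofReal_zero]
      have hBb0 : Bb T.root = 0 := by
        simp only [hBb]
        refine Finset.sum_eq_zero fun j hj => ?_
        have hj' := (hfin T.root).mem_toFinset.1 hj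
        simp only [hβ]
        rw [hj'.1, hf0p, mul_zero, ENNReal.ofReal_zero]
      rw [hn0, hBb0, mul_zero, add_zero]
      exact zero_le
    · have hwk := hw k hk
      have hRk := hR k hk
      set A : ℝ := v k * (1 - (w k)⁻¹) ^ (p - 1) * |f k| ^ p with hA
      set B : ℝ := (∑ j ∈ (hfin k).toFinset, v j * (w j - 1) ^ (p - 1)) * |f k| ^ p with hB
      have hB0 : 0 ≤ B := by
        rw [hB]
        apply mul_nonneg _ (Real.rpow_nonneg (abs_nonneg _) _)
        apply Finset.sum_nonneg
        intro j hj
        have hj' := (hfin k).mem_toFinset.1 hj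
        have hwj := hw j hj'.2
        exact mul_nonneg (hv j).le (Real.rpow_nonneg (by linarith) _)
      have hRmul : Rop T hfin v μ p w k * (μ k * |f k| ^ p) = A - B := by
        simp only [hA, hB, Rop, Finset.sum_mul]
        rw [← Finset.sum_mul]
        exact gen_aux _ _ _ _ (hμ k).ne'
      have hAB : 0 ≤ A - B := by
        rw [← hRmul]
        exact mul_nonneg hRk (mul_nonneg (hμ k).le (Real.rpow_nonneg (abs_nonneg _) _))
      have hcle : c ≤ ENNReal.ofReal (Rop T hfin v μ p w k) := by
        rw [hc]; exact iInf_le _ (⟨k, hk⟩ : {i : V // i ≠ T.root})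
      have hstep1 : c * n k ≤ ENNReal.ofReal (A - B) := by
        calc c * n k ≤ ENNReal.ofReal (Rop T hfin v μ p w k)
            * ENNReal.ofReal (μ k * |f k| ^ p) := by
              simp only [hn]; exact mul_le_mul_left hcle _
          _ = ENNReal.ofReal (Rop T hfin v μ p w k * (μ k * |f k| ^ p)) :=
              (ENNReal.ofReal_mul hRk).symm
          _ = ENNReal.ofReal (A - B) := by rw [hRmul]
      have hBbB : Bb k = ENNReal.ofReal B := by
        rw [hB, Finset.sum_mul]
        rw [ENNReal.ofReal_sum_of_nonneg]
        · simp only [hBb]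
          refine Finset.sum_congr rfl fun j hj => ?_
          have hj' := (hfin k).mem_toFinset.1 hj
          simp only [hβ]
          rw [hj'.1]
        · intro j hj
          have hj' := (hfin k).mem_toFinset.1 hj
          have hwj := hw j hj'.2
          exact mul_nonneg (mul_nonneg (hv j).le (Real.rpow_nonneg (by linarith) _))
            (Real.rpow_nonneg (abs_nonneg _) _)
      calc c * n k + Bb k ≤ ENNReal.ofReal (A - B) + ENNReal.ofReal B :=
            add_le_add hstep1 hBbB.le
        _ = ENNReal.ofReal A := by rw [← ENNReal.ofReal_add hAB hB0, sub_add_cancel]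
        _ ≤ g k + β k := by
            simp only [hg, hβ]
            rw [if_neg hk]
            rw [← ENNReal.ofReal_add
              (mul_nonneg (hv k).le (Real.rpow_nonneg (abs_nonneg _) _))
              (mul_nonneg (mul_nonneg (hv k).le (Real.rpow_nonneg (by linarith) _))
                (Real.rpow_nonneg (abs_nonneg _) _))]
            apply ENNReal.ofReal_le_ofReal
            have hki := key_ineq hp hwk (a := f k) (b := f (T.par k))
            have h2 := mul_le_mul_of_nonneg_left hki (hv k).le
            rw [hA]
            nlinarith [h2]
  -- regrouping for parent-closed finsets
  have hregroup : ∀ F : Finset V, (∀ k ∈ F, T.par k ∈ F) →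
      (∑ k ∈ F, β k) ≤ ∑ k ∈ F, Bb k := by
    intro F hF
    have hdisj : (↑F : Set V).PairwiseDisjoint (fun k => (hfin k).toFinset) := by
      intro x _ y _ hxy
      simp only [Function.onFun, Finset.disjoint_left]
      intro j hjx hjy
      exact hxy (((hfin x).mem_toFinset.1 hjx).1.symm.trans ((hfin y).mem_toFinset.1 hjy).1)
    calc (∑ k ∈ F, β k) = ∑ k ∈ F.erase T.root, β k := (Finset.sum_erase F hβroot).symm
      _ ≤ ∑ j ∈ F.biUnion (fun k => (hfin k).toFinset), β j := by
          apply Finset.sum_le_sum_of_subset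
          intro k hk
          obtain ⟨hk1, hk2⟩ := Finset.mem_erase.1 hk
          exact Finset.mem_biUnion.2 ⟨T.par k, hF k hk2, (hfin _).mem_toFinset.2 ⟨rfl, hk1⟩⟩
      _ = ∑ k ∈ F, ∑ j ∈ (hfin k).toFinset, β j := Finset.sum_biUnion hdisj
      _ = ∑ k ∈ F, Bb k := by simp only [hBb]
  -- the main finite bound
  have hmain : ∀ F : Finset V, (∀ k ∈ F, T.par k ∈ F) →
      c * (∑ k ∈ F, n k) ≤ Dp T v p f := by
    intro F hF
    have h1 : c * (∑ k ∈ F, n k) + (∑ k ∈ F, Bb k)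
        ≤ (∑ k ∈ F, g k) + ∑ k ∈ F, β k := by
      rw [Finset.mul_sum, ← Finset.sum_add_distrib, ← Finset.sum_add_distrib]
      exact Finset.sum_le_sum fun k _ => hkey k
    have h2 : c * (∑ k ∈ F, n k) + (∑ k ∈ F, Bb k)
        ≤ (∑ k ∈ F, g k) + ∑ k ∈ F, Bb k :=
      h1.trans (add_le_add_right (hregroup F hF) _)
    have h3 : (∑ k ∈ F, Bb k) ≠ ∞ := by
      refine ENNReal.sum_ne_top.2 fun k _ => ?_
      simp only [hBb]
      exact ENNReal.sum_ne_top.2 fun j _ => ENNReal.ofReal_ne_top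
    have h4 : c * (∑ k ∈ F, n k) ≤ ∑ k ∈ F, g k :=
      (ENNReal.add_le_add_iff_right h3).1 h2
    refine h4.trans ?_
    rw [← hDp]
    exact ENNReal.sum_le_tsum F
  -- parent-closure of finite sets
  have hclos : ∀ F : Finset V, ∃ F' : Finset V, F ⊆ F' ∧ ∀ k ∈ F', T.par k ∈ F' := by
    intro F
    refine ⟨F.biUnion (fun k => (Finset.range (T.level k + 1)).image (fun m => T.par^[m] k)),
      ?_, ?_⟩
    · intro k hk
      exact Finset.mem_biUnion.2 ⟨k, hk,
        Finset.mem_image.2 ⟨0, Finset.mem_range.2 (Nat.succ_pos _), rfl⟩⟩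
    · intro j hj
      obtain ⟨k, hk, hj'⟩ := Finset.mem_biUnion.1 hj
      obtain ⟨m, hm, rfl⟩ := Finset.mem_image.1 hj'
      rw [Finset.mem_range] at hm
      by_cases hml : m + 1 < T.level k + 1
      · refine Finset.mem_biUnion.2 ⟨k, hk, Finset.mem_image.2
          ⟨m + 1, Finset.mem_range.2 hml, ?_⟩⟩
        rw [Function.iterate_succ_apply']
      · have hm' : m = T.level k := by omega
        subst hm'
        rw [T.par_iter_root, T.par_root]
        rwa [T.par_iter_root] at hj
  -- conclusion
  calc c = c * ∑' k : V, n k := by rw [hN, mul_one]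
    _ = c * ⨆ F : Finset V, ∑ k ∈ F, n k := by rw [ENNReal.tsum_eq_iSup_sum]
    _ = ⨆ F : Finset V, c * ∑ k ∈ F, n k := ENNReal.mul_iSup _ _
    _ ≤ Dp T v p f := by
        refine iSup_le fun F => ?_
        obtain ⟨F', hFF', hcl⟩ := hclos F
        exact le_trans (mul_le_mul_right (Finset.sum_le_sum_of_subset hFF') c) (hmain F' hcl)
end
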